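/- Let Δ ⊆ [n] be a set of positive integers with 1 ∈ Δ, and Γ_2 = Δ ∩ [3,n]. With a(Δ), b(Δ), c(Δ), k(Δ), and d(Δ,t) defined as in the context, for all t ≥ 1 we have d(Δ,t) ≤ d(Γ_2, t) + 1. -/

import Mathlib

/-- Group a sorted list of naturals into maximal runs of consecutive integers
(the maximal block decomposition). -/
def runs : List ℕ → List (List ℕ)
  | [] => []
  | x :: xs =>
    match runs xs with
    | (y :: ys) :: rest => if x + 1 = y then (x :: y :: ys) :: rest else [x] :: (y :: ys) :: rest
    | l => [x] :: l

/-- For each maximal block, record (min, max, cardinality mod 3). -/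
def blockData (l : List ℕ) : List (ℕ × ℕ × ℕ) :=
  (runs l).map (fun b => (b.headI, (b.getLast?).getD 0, b.length % 3))

/-- Fold over the list of blocks, grouping consecutive gluable type-1/type-2 blocks into
maximal extended blocks; the state `(t, s)` counts type-1/type-2 blocks of the current
extended block and `prev` records the max of the previous block if it can be glued onto.
Each finished extended block with `t` type-1 and `s` type-2 blocks contributes
`t % 2` to `a` and `s + (t - t % 2) / 2` to `b`; the result is `(a, b)`. -/
def go : List (ℕ × ℕ × ℕ) → ℕ → ℕ → Option ℕ → ℕ × ℕ
  | [], t, s, _ => (t % 2, s + (t - t % 2) / 2)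
  | (m, mx, ty) :: rest, t, s, prev =>
    if ty = 0 then
      let r := go rest 0 0 none
      (r.1 + t % 2, r.2 + s + (t - t % 2) / 2)
    else if prev = some (m - 2) ∧ 2 ≤ m then
      go rest (t + if ty = 1 then 1 else 0) (s + if ty = 2 then 1 else 0) (some mx)
    else
      let r := go rest (if ty = 1 then 1 else 0) (if ty = 2 then 1 else 0) (some mx)
      (r.1 + t % 2, r.2 + s + (t - t % 2) / 2)

/-- The invariant `a(Δ)`. -/
def aF (Δ : Finset ℕ) : ℕ := (go (blockData (Δ.sort (· ≤ ·))) 0 0 none).1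

/-- The invariant `b(Δ)`. -/
def bF (Δ : Finset ℕ) : ℕ := (go (blockData (Δ.sort (· ≤ ·))) 0 0 none).2

/-- The invariant `c(Δ) = (|Δ| - a(Δ) - 2 b(Δ)) / 3`. -/
def cF (Δ : Finset ℕ) : ℕ := (Δ.card - aF Δ - 2 * bF Δ) / 3

/-- The invariant `k(Δ) = a(Δ) + b(Δ) + c(Δ)`. -/
def kF (Δ : Finset ℕ) : ℕ := aF Δ + bF Δ + cF Δ

/-- The piecewise function `d(Δ, t)` of the paper. -/
def dF (Δ : Finset ℕ) (t : ℕ) : ℕ :=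
  if t ≤ aF Δ then kF Δ + 2 - t
  else if t ≤ aF Δ + 2 * bF Δ then kF Δ + 1 - (t + aF Δ - 1) / 2
  else if t ≤ Δ.card then kF Δ + 1 - (t + 2 * aF Δ + bF Δ - 1) / 3
  else 1


lemma go_zero (l : List (ℕ × ℕ × ℕ)) (p q : Option ℕ) : go l 0 0 p = go l 0 0 q := by
  cases l with
  | nil => rfl
  | cons hd rest =>
    obtain ⟨m, mx, ty⟩ := hd
    simp only [go]
    set i1 := (if ty = 1 then 1 else 0) with hi1
    set i2 := (if ty = 2 then 1 else 0) with hi2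
    split_ifs <;> simp

lemma go_succ_s (l : List (ℕ × ℕ × ℕ)) (t s : ℕ) (p : Option ℕ) :
    go l t (s + 1) p = ((go l t s p).1, (go l t s p).2 + 1) := by
  induction l generalizing t s p with
  | nil => simp only [go]; simp; omega
  | cons hd rest ih =>
    obtain ⟨m, mx, ty⟩ := hd
    simp only [go]
    set i1 := (if ty = 1 then 1 else 0) with hi1
    set i2 := (if ty = 2 then 1 else 0) with hi2
    split_ifs
    · simp; omega
    · rw [show s + 1 + i2 = s + i2 + 1 by omega, ih]
    · simp; omega

lemma go_succ_t (l : List (ℕ × ℕ × ℕ)) (t s : ℕ) (p : Option ℕ) :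
    ((go l (t+1) s p).1 = (go l t s p).1 + 1 ∧ (go l (t+1) s p).2 = (go l t s p).2) ∨
    ((go l t s p).1 = (go l (t+1) s p).1 + 1 ∧ (go l (t+1) s p).2 = (go l t s p).2 + 1) := by
  induction l generalizing t s p with
  | nil => simp only [go]; omega
  | cons hd rest ih =>
    obtain ⟨m, mx, ty⟩ := hd
    simp only [go]
    set i1 := (if ty = 1 then 1 else 0) with hi1
    set i2 := (if ty = 2 then 1 else 0) with hi2
    split_ifs
    · simp; omega
    · rw [show t + 1 + i1 = t + i1 + 1 by omega]; exact ih _ _ _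
    · simp; omega

lemma go_bound (l : List (ℕ × ℕ × ℕ)) (hl : ∀ x ∈ l, x.2.2 < 3) (t s : ℕ) (p : Option ℕ) :
    ∃ m, t + 2*s + (l.map (fun x => x.2.2)).sum = (go l t s p).1 + 2*(go l t s p).2 + 3*m := by
  induction l generalizing t s p with
  | nil => exact ⟨0, by simp only [go]; simp; omega⟩
  | cons hd rest ih =>
    obtain ⟨m, mx, ty⟩ := hd
    have hty : ty < 3 := hl (m, mx, ty) (by simp)
    have hrest : ∀ x ∈ rest, x.2.2 < 3 := fun x hx => hl x (by simp [hx])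
    simp only [go, List.map_cons, List.sum_cons]
    set i1 := (if ty = 1 then 1 else 0) with hi1
    set i2 := (if ty = 2 then 1 else 0) with hi2
    split_ifs with h0 hg
    · obtain ⟨m1, hm1⟩ := ih hrest 0 0 none
      exact ⟨m1, by simp at hm1 ⊢; omega⟩
    · obtain ⟨m1, hm1⟩ := ih hrest (t + i1) (s + i2) (some mx)
      refine ⟨m1, ?_⟩
      have hv : i1 + 2 * i2 = ty := by
        rcases (by omega : ty = 1 ∨ ty = 2) with h | h <;> simp [hi1, hi2, h] <;> omega
      omega
    · obtain ⟨m1, hm1⟩ := ih hrest i1 i2 (some mx)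
      refine ⟨m1, ?_⟩
      have hv : i1 + 2 * i2 = ty := by
        rcases (by omega : ty = 1 ∨ ty = 2) with h | h <;> simp [hi1, hi2, h] <;> omega
      simp; omega
lemma runs_cons (x : ℕ) (xs : List ℕ) :
    ∃ ys rest, runs (x :: xs) = (x :: ys) :: rest := by
  simp only [runs]
  rcases h : runs xs with _ | ⟨_ | ⟨y, ys⟩, rest⟩ <;> dsimp only
  · exact ⟨[], [], rfl⟩
  · exact ⟨[], _, rfl⟩
  · by_cases hxy : x + 1 = y
    · rw [if_pos hxy]; exact ⟨_, _, rfl⟩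
    · rw [if_neg hxy]; exact ⟨[], _, rfl⟩

lemma runs_join (l : List ℕ) : (runs l).flatten = l := by
  induction l with
  | nil => rfl
  | cons x xs ih =>
    simp only [runs]
    rcases h : runs xs with _ | ⟨_ | ⟨y, ys⟩, rest⟩ <;> rw [h] at ih <;> dsimp only <;>
      [simp_all; simp_all; skip]
    by_cases hxy : x + 1 = y
    · rw [if_pos hxy]; simp_all
    · rw [if_neg hxy]; simp_all

lemma sum_mod3 (ns : List ℕ) : ∃ m, ns.sum = (ns.map (· % 3)).sum + 3 * m := by
  induction ns with
  | nil => exact ⟨0, rfl⟩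
  | cons n ns ih =>
    obtain ⟨m, hm⟩ := ih
    exact ⟨n / 3 + m, by simp [hm]; omega⟩

lemma blockData_card (l : List ℕ) :
    ∃ m, l.length = ((blockData l).map (fun x => x.2.2)).sum + 3 * m := by
  have h1 : l.length = ((runs l).map List.length).sum := by
    conv_lhs => rw [← runs_join l]
    simp [List.length_flatten]
  obtain ⟨m, hm⟩ := sum_mod3 ((runs l).map List.length)
  refine ⟨m, ?_⟩
  rw [h1, hm]
  congr 1
  simp [blockData, List.map_map]
  rfl

lemma blockData_ty_lt (l : List ℕ) : ∀ x ∈ blockData l, x.2.2 < 3 := by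
  intro x hx
  simp only [blockData, List.mem_map] at hx
  obtain ⟨b, -, rfl⟩ := hx
  exact Nat.mod_lt _ (by norm_num)
lemma go_cons_first (m mx ty : ℕ) (bd : List (ℕ × ℕ × ℕ)) :
    go ((m, mx, ty) :: bd) 0 0 none =
      if ty = 0 then go bd 0 0 none
      else go bd (if ty = 1 then 1 else 0) (if ty = 2 then 1 else 0) (some mx) := by
  simp only [go]
  set i1 := (if ty = 1 then 1 else 0) with hi1
  set i2 := (if ty = 2 then 1 else 0) with hi2
  split_ifs with h0 hg <;> simp_all

lemma runs_cons_not_adj (x : ℕ) (L : List ℕ) (h : ∀ z, L.head? = some z → x + 1 ≠ z) :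
    runs (x :: L) = [x] :: runs L := by
  cases L with
  | nil => rfl
  | cons z L' =>
    obtain ⟨ys, rest, hr⟩ := runs_cons z L'
    rw [runs, hr]
    dsimp only
    rw [if_neg (h z rfl)]

lemma wf (S : Finset ℕ) : ∃ c, S.card = aF S + 2 * bF S + 3 * c := by
  obtain ⟨m1, h1⟩ := blockData_card (S.sort (· ≤ ·))
  obtain ⟨m2, h2⟩ := go_bound (blockData (S.sort (· ≤ ·))) (blockData_ty_lt _) 0 0 none
  refine ⟨m1 + m2, ?_⟩
  rw [← Finset.length_sort (α := ℕ) (· ≤ ·) (s := S)]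
  unfold aF bF
  omega

lemma dF_eq (S : Finset ℕ) (c t : ℕ) (h : S.card = aF S + 2 * bF S + 3 * c) :
    dF S t = if t ≤ aF S then aF S + bF S + c + 2 - t
      else if t ≤ aF S + 2 * bF S then aF S + bF S + c + 1 - (t + aF S - 1) / 2
      else if t ≤ aF S + 2 * bF S + 3 * c then aF S + bF S + c + 1 - (t + 2 * aF S + bF S - 1) / 3
      else 1 := by
  have hc : cF S = c := by unfold cF; omega
  unfold dF kF
  rw [hc, h]
lemma key_arith (a b c a' b' c' t e : ℕ) (ht : 1 ≤ t)
    (hc : a + 2*b + 3*c = a' + 2*b' + 3*c' + e)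
    (h : (a = a' + 1 ∧ b = b' ∧ e = 1) ∨ (a' = a + 1 ∧ b = b' + 1 ∧ e = 1)
       ∨ (a = a' ∧ b = b' + 1 ∧ e = 2) ∨ (a' = a + 1 ∧ b = b' ∧ e = 2)
       ∨ (a = a' + 1 ∧ b' = b + 1 ∧ e = 2)) :
    (if t ≤ a then a+b+c+2-t else if t ≤ a + 2*b then a+b+c+1 - (t+a-1)/2
      else if t ≤ a+2*b+3*c then a+b+c+1-(t+2*a+b-1)/3 else 1)
    ≤ (if t ≤ a' then a'+b'+c'+2-t else if t ≤ a' + 2*b' then a'+b'+c'+1-(t+a'-1)/2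
      else if t ≤ a'+2*b'+3*c' then a'+b'+c'+1-(t+2*a'+b'-1)/3 else 1) + 1 := by
  split_ifs <;> omega
lemma head?_mem {l : List ℕ} {z : ℕ} (h : l.head? = some z) : z ∈ l := by
  cases l <;> simp_all

theorem d_gamma2 {n : ℕ} (Δ : Finset ℕ) (hsub : Δ ⊆ Finset.Icc 1 n) (h1 : 1 ∈ Δ) :
    ∀ t, 1 ≤ t → dF Δ t ≤ dF (Δ ∩ Finset.Icc 3 n) t + 1 := by
  intro t ht
  set Γ := Δ ∩ Finset.Icc 3 n with hΓ
  have hΓ3 : ∀ x ∈ Γ, 3 ≤ x := by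
    intro x hx
    rw [hΓ, Finset.mem_inter, Finset.mem_Icc] at hx
    exact hx.2.1
  have hΓsub : Γ ⊆ Δ := by rw [hΓ]; exact Finset.inter_subset_left
  set L := Γ.sort (· ≤ ·) with hLdef
  have hL3 : ∀ x ∈ L, 3 ≤ x := fun x hx => hΓ3 x ((Finset.mem_sort _).mp hx)
  have h1Γ : (1:ℕ) ∉ Γ := fun h => by have := hΓ3 1 h; omega
  have h2Γ : (2:ℕ) ∉ Γ := fun h => by have := hΓ3 2 h; omega
  obtain ⟨e, hcard, hab⟩ :
      ∃ e, Δ.card = Γ.card + e ∧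
        ((aF Δ = aF Γ + 1 ∧ bF Δ = bF Γ ∧ e = 1) ∨
         (aF Γ = aF Δ + 1 ∧ bF Δ = bF Γ + 1 ∧ e = 1) ∨
         (aF Δ = aF Γ ∧ bF Δ = bF Γ + 1 ∧ e = 2) ∨
         (aF Γ = aF Δ + 1 ∧ bF Δ = bF Γ ∧ e = 2) ∨
         (aF Δ = aF Γ + 1 ∧ bF Γ = bF Δ + 1 ∧ e = 2)) := by
    by_cases h2 : 2 ∈ Δ
    · have h2n : 2 ≤ n := (Finset.mem_Icc.mp (hsub h2)).2
      have hΔeq : Δ = insert 1 (insert 2 Γ) := by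
        ext x
        simp only [Finset.mem_insert]
        constructor
        · intro hx
          have hx1 := Finset.mem_Icc.mp (hsub hx)
          by_cases e1 : x = 1
          · exact Or.inl e1
          by_cases e2 : x = 2
          · exact Or.inr (Or.inl e2)
          refine Or.inr (Or.inr ?_)
          rw [hΓ, Finset.mem_inter, Finset.mem_Icc]
          exact ⟨hx, by omega, hx1.2⟩
        · rintro (rfl | rfl | hx)
          · exact h1
          · exact h2
          · exact hΓsub hx
      have h1i : (1:ℕ) ∉ insert 2 Γ := by
        simp only [Finset.mem_insert]
        push_neg
        exact ⟨by norm_num, h1Γ⟩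
      have hsort2 : (insert 2 Γ).sort (· ≤ ·) = 2 :: L :=
        Finset.sort_insert (r := (· ≤ ·)) (fun b hb => by have := hΓ3 b hb; omega) h2Γ
      have hb1 : ∀ b ∈ insert 2 Γ, 1 ≤ b := by
        intro b hb
        simp only [Finset.mem_insert] at hb
        rcases hb with rfl | hb
        · norm_num
        · have := hΓ3 b hb; omega
      have hsortΔ : Δ.sort (· ≤ ·) = 1 :: 2 :: L := by
        rw [hΔeq, Finset.sort_insert (r := (· ≤ ·)) hb1 h1i, hsort2]
      have hcard2 : Δ.card = Γ.card + 2 := by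
        rw [hΔeq, Finset.card_insert_of_notMem h1i, Finset.card_insert_of_notMem h2Γ]
      by_cases h3 : 3 ∈ Δ
      · -- case C : 2, 3 ∈ Δ
        have h3Γ : 3 ∈ Γ := by
          rw [hΓ, Finset.mem_inter, Finset.mem_Icc]
          exact ⟨h3, by norm_num, (Finset.mem_Icc.mp (hsub h3)).2⟩
        have h3L : 3 ∈ L := (Finset.mem_sort _).mpr h3Γ
        obtain ⟨L', hL'⟩ : ∃ L', L = 3 :: L' := by
          cases hE : L with
          | nil => rw [hE] at h3L; simp at h3L
          | cons z L'' =>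
            have hz3 : 3 ≤ z := hL3 z (by rw [hE]; simp)
            have hs := Finset.pairwise_sort Γ (· ≤ ·)
            rw [← hLdef, hE, List.pairwise_cons] at hs
            rw [hE] at h3L
            have hz : z = 3 := by
              rcases List.mem_cons.mp h3L with h | h
              · omega
              · have := hs.1 3 h; omega
            exact ⟨L'', by rw [hz]⟩
        obtain ⟨ys, rest, hr⟩ := runs_cons 3 L'
        have hr2 : runs (2 :: L) = (2 :: 3 :: ys) :: rest := by
          rw [hL', runs, hr]
          dsimp only
          rw [if_pos rfl]
        have hr1 : runs (1 :: 2 :: L) = (1 :: 2 :: 3 :: ys) :: rest := by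
          rw [runs, hr2]
          dsimp only
          rw [if_pos rfl]
        have hbdΔ : blockData (1 :: 2 :: L) =
            (1, ((3 :: ys).getLast?).getD 0, (ys.length + 3) % 3) ::
              rest.map (fun b => (b.headI, (b.getLast?).getD 0, b.length % 3)) := by
          simp only [blockData, hr1, List.map_cons, List.headI, List.getLast?_cons_cons,
            List.length_cons]
        have hbdΓ : blockData L =
            (3, ((3 :: ys).getLast?).getD 0, (ys.length + 1) % 3) ::
              rest.map (fun b => (b.headI, (b.getLast?).getD 0, b.length % 3)) := by
          rw [hL']
          simp only [blockData, hr, List.map_cons, List.headI, List.length_cons]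
        set g := ((3 :: ys).getLast?).getD 0 with hg
        set bdr := rest.map (fun b => (b.headI, (b.getLast?).getD 0, b.length % 3)) with hbdr
        have hm3 : ys.length % 3 = 0 ∨ ys.length % 3 = 1 ∨ ys.length % 3 = 2 := by omega
        have haΔ : aF Δ = (go (blockData (1 :: 2 :: L)) 0 0 none).1 := by
          unfold aF; rw [hsortΔ]
        have hbΔ : bF Δ = (go (blockData (1 :: 2 :: L)) 0 0 none).2 := by
          unfold bF; rw [hsortΔ]
        have haΓ : aF Γ = (go (blockData L) 0 0 none).1 := by
          unfold aF; rw [← hLdef]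
        have hbΓ : bF Γ = (go (blockData L) 0 0 none).2 := by
          unfold bF; rw [← hLdef]
        rcases hm3 with hm | hm | hm
        · -- tyΔ = 0, tyΓ = 1
          have t1 : (ys.length + 3) % 3 = 0 := by omega
          have t2 : (ys.length + 1) % 3 = 1 := by omega
          have hgΔ : go (blockData (1 :: 2 :: L)) 0 0 none = go bdr 0 0 (some g) := by
            rw [hbdΔ, t1, go_cons_first, if_pos rfl]
            exact go_zero _ none (some g)
          have hgΓ : go (blockData L) 0 0 none = go bdr 1 0 (some g) := by
            rw [hbdΓ, t2, go_cons_first, if_neg (by norm_num)]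
            norm_num
          rcases go_succ_t bdr 0 0 (some g) with ⟨hA, hB⟩ | ⟨hA, hB⟩ <;>
            simp only [Nat.zero_add] at hA hB
          · exact ⟨2, hcard2, Or.inr (Or.inr (Or.inr (Or.inl
              ⟨by rw [haΓ, haΔ, hgΔ, hgΓ]; omega, by rw [hbΓ, hbΔ, hgΔ, hgΓ]; omega, rfl⟩)))⟩
          · exact ⟨2, hcard2, Or.inr (Or.inr (Or.inr (Or.inr
              ⟨by rw [haΓ, haΔ, hgΔ, hgΓ]; omega, by rw [hbΓ, hbΔ, hgΔ, hgΓ]; omega, rfl⟩)))⟩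
        · -- tyΔ = 1, tyΓ = 2
          have t1 : (ys.length + 3) % 3 = 1 := by omega
          have t2 : (ys.length + 1) % 3 = 2 := by omega
          have hgΔ : go (blockData (1 :: 2 :: L)) 0 0 none = go bdr 1 0 (some g) := by
            rw [hbdΔ, t1, go_cons_first, if_neg (by norm_num)]
            norm_num
          have hgΓ : go (blockData L) 0 0 none =
              ((go bdr 0 0 (some g)).1, (go bdr 0 0 (some g)).2 + 1) := by
            rw [hbdΓ, t2, go_cons_first, if_neg (by norm_num)]
            norm_num
            exact go_succ_s bdr 0 0 (some g)
          rcases go_succ_t bdr 0 0 (some g) with ⟨hA, hB⟩ | ⟨hA, hB⟩ <;>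
            simp only [Nat.zero_add] at hA hB
          · exact ⟨2, hcard2, Or.inr (Or.inr (Or.inr (Or.inr
              ⟨by rw [haΓ, haΔ, hgΔ, hgΓ]; omega, by rw [hbΓ, hbΔ, hgΔ, hgΓ]; omega, rfl⟩)))⟩
          · exact ⟨2, hcard2, Or.inr (Or.inr (Or.inr (Or.inl
              ⟨by rw [haΓ, haΔ, hgΔ, hgΓ]; omega, by rw [hbΓ, hbΔ, hgΔ, hgΓ]; omega, rfl⟩)))⟩
        · -- tyΔ = 2, tyΓ = 0
          have t1 : (ys.length + 3) % 3 = 2 := by omega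
          have t2 : (ys.length + 1) % 3 = 0 := by omega
          have hgΔ : go (blockData (1 :: 2 :: L)) 0 0 none =
              ((go bdr 0 0 none).1, (go bdr 0 0 none).2 + 1) := by
            rw [hbdΔ, t1, go_cons_first, if_neg (by norm_num)]
            norm_num
            rw [go_succ_s bdr 0 0 (some g), go_zero bdr (some g) none]
          have hgΓ : go (blockData L) 0 0 none = go bdr 0 0 none := by
            rw [hbdΓ, t2, go_cons_first, if_pos rfl]
          exact ⟨2, hcard2, Or.inr (Or.inr (Or.inl
            ⟨by rw [haΓ, haΔ, hgΔ, hgΓ], by rw [hbΓ, hbΔ, hgΔ, hgΓ], rfl⟩))⟩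
      · -- case B : 2 ∈ Δ, 3 ∉ Δ
        have hL4 : ∀ x ∈ L, 4 ≤ x := by
          intro x hx
          have h3x := hL3 x hx
          have : x ∈ Δ := hΓsub ((Finset.mem_sort _).mp hx)
          have hx3 : x ≠ 3 := fun he => h3 (he ▸ this)
          omega
        have hr2 : runs (2 :: L) = [2] :: runs L := by
          apply runs_cons_not_adj
          intro z hz
          have := hL4 z (head?_mem hz)
          omega
        have hr1 : runs (1 :: 2 :: L) = [1, 2] :: runs L := by
          rw [runs, hr2]
          dsimp only
          rw [if_pos rfl]
        have hbdΔ : blockData (1 :: 2 :: L) = (1, 2, 2) :: blockData L := by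
          simp [blockData, hr1]
        have hgΔ : go (blockData (1 :: 2 :: L)) 0 0 none =
            ((go (blockData L) 0 0 none).1, (go (blockData L) 0 0 none).2 + 1) := by
          rw [hbdΔ, go_cons_first, if_neg (by norm_num)]
          norm_num
          rw [go_succ_s (blockData L) 0 0 (some 2), go_zero (blockData L) (some 2) none]
        refine ⟨2, hcard2, Or.inr (Or.inr (Or.inl ⟨?_, ?_, rfl⟩))⟩
        · unfold aF; rw [hsortΔ, ← hLdef, hgΔ]
        · unfold bF; rw [hsortΔ, ← hLdef, hgΔ]
    · -- case A : 2 ∉ Δ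
      have hΔeq : Δ = insert 1 Γ := by
        ext x
        simp only [Finset.mem_insert]
        constructor
        · intro hx
          have hx1 := Finset.mem_Icc.mp (hsub hx)
          by_cases e1 : x = 1
          · exact Or.inl e1
          refine Or.inr ?_
          rw [hΓ, Finset.mem_inter, Finset.mem_Icc]
          have : x ≠ 2 := fun h => h2 (h ▸ hx)
          exact ⟨hx, by omega, hx1.2⟩
        · rintro (rfl | hx)
          · exact h1
          · exact hΓsub hx
      have hsortΔ : Δ.sort (· ≤ ·) = 1 :: L := by
        rw [hΔeq]
        exact Finset.sort_insert (r := (· ≤ ·)) (fun b hb => by have := hΓ3 b hb; omega) h1Γ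
      have hcard1 : Δ.card = Γ.card + 1 := by
        rw [hΔeq, Finset.card_insert_of_notMem h1Γ]
      have hr1 : runs (1 :: L) = [1] :: runs L := by
        apply runs_cons_not_adj
        intro z hz
        have := hL3 z (head?_mem hz)
        omega
      have hbdΔ : blockData (1 :: L) = (1, 1, 1) :: blockData L := by
        simp [blockData, hr1]
      have hgΔ : go (blockData (1 :: L)) 0 0 none = go (blockData L) 1 0 (some 1) := by
        rw [hbdΔ, go_cons_first, if_neg (by norm_num)]
        norm_num
      have hgΓ : go (blockData L) 0 0 none = go (blockData L) 0 0 (some 1) :=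
        go_zero _ none (some 1)
      have haΔ : aF Δ = (go (blockData L) 1 0 (some 1)).1 := by
        unfold aF; rw [hsortΔ, hgΔ]
      have hbΔ : bF Δ = (go (blockData L) 1 0 (some 1)).2 := by
        unfold bF; rw [hsortΔ, hgΔ]
      have haΓ : aF Γ = (go (blockData L) 0 0 (some 1)).1 := by
        unfold aF; rw [← hLdef, hgΓ]
      have hbΓ : bF Γ = (go (blockData L) 0 0 (some 1)).2 := by
        unfold bF; rw [← hLdef, hgΓ]
      rcases go_succ_t (blockData L) 0 0 (some 1) with ⟨hA, hB⟩ | ⟨hA, hB⟩ <;>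
        simp only [Nat.zero_add] at hA hB
      · exact ⟨1, hcard1, Or.inl ⟨by omega, by omega, rfl⟩⟩
      · exact ⟨1, hcard1, Or.inr (Or.inl ⟨by omega, by omega, rfl⟩)⟩
  obtain ⟨c, hc⟩ := wf Δ
  obtain ⟨c', hc'⟩ := wf Γ
  rw [dF_eq Δ c t hc, dF_eq Γ c' t hc']
  exact key_arith _ _ _ _ _ _ t e ht (by omega) hab
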